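/- Sound overapproximation of the perturbed linear flow: consider ẋ = Ax + b + Hd(t) in ℝⁿ with ‖d(t)‖ ≤ δ for all t. Then for any initial set T, the reachable set at time h satisfies Reach_h(T) ⊆ e^{Ah}T + {∫₀ʰ e^{A(h−s)} b ds} + B(0, ρ), where ρ = δ‖H‖ ∫₀ʰ ‖e^{A(h−s)}‖ ds, with + denoting Minkowski sum and B(0,ρ) the closed ball of radius ρ. -/

import Mathlib

open scoped Pointwise

open NormedSpace intervalIntegral

set_option maxHeartbeats 1000000 in
theorem perturbed_linear_flow_overapprox {n : ℕ}
    (A H : EuclideanSpace ℝ (Fin n) →L[ℝ] EuclideanSpace ℝ (Fin n))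
    (b : EuclideanSpace ℝ (Fin n)) (δ h : ℝ) (hδ : 0 ≤ δ) (hh : 0 ≤ h)
    (T : Set (EuclideanSpace ℝ (Fin n)))
    (x d : ℝ → EuclideanSpace ℝ (Fin n))
    (hx0 : x 0 ∈ T)
    (hd : ∀ t, ‖d t‖ ≤ δ)
    (hode : ∀ t, HasDerivAt x (A (x t) + b + H (d t)) t) :
    x h ∈
      ((fun y => NormedSpace.exp (h • A) y +
          ∫ s in (0 : ℝ)..h, NormedSpace.exp ((h - s) • A) b) '' T) +
        Metric.closedBall 0 (δ * ‖H‖ * ∫ s in (0 : ℝ)..h, ‖NormedSpace.exp ((h - s) • A)‖) := by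
  set E : ℝ → (EuclideanSpace ℝ (Fin n) →L[ℝ] EuclideanSpace ℝ (Fin n)) :=
    fun t => exp ((h - t) • A) with hE
  have hEcont : Continuous E := by
    exact (continuous_iff_continuousAt.2 fun y => (exp_analytic (𝕂 := ℝ) y).continuousAt).comp ((continuous_const.sub continuous_id).smul continuous_const)
  -- derivative of E
  have hEderiv : ∀ t : ℝ, HasDerivAt E (-(E t * A)) t := by
    intro t
    have h1 : HasDerivAt (fun u : ℝ => exp (u • A)) (exp ((h - t) • A) * A) (h - t) :=
      hasDerivAt_exp_smul_const A (h - t)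
    have h2 : HasDerivAt (fun u : ℝ => h - u) (-1) t := by
      simpa using (hasDerivAt_id t).const_sub h
    have := h1.scomp t h2
    simpa [hE, neg_smul, one_smul, mul_comm, Function.comp_def] using this
  set g : ℝ → EuclideanSpace ℝ (Fin n) :=
    fun t => E t (x t) - ∫ s in (0 : ℝ)..t, E s b with hg
  have hIbInt : ∀ t : ℝ, HasDerivAt (fun u => ∫ s in (0 : ℝ)..u, E s b) (E t b) t := by
    intro t
    exact ((hEcont.clm_apply continuous_const).integral_hasStrictDerivAt 0 t).hasDerivAt
  have hgd : ∀ t : ℝ, HasDerivAt g (E t (H (d t))) t := by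
    intro t
    have h1 : HasDerivAt (fun u => E u (x u))
        ((-(E t * A)) (x t) + E t (A (x t) + b + H (d t))) t :=
      (hEderiv t).clm_apply (hode t)
    have h2 := h1.sub (hIbInt t)
    have heq : (-(E t * A)) (x t) + E t (A (x t) + b + H (d t)) - E t b = E t (H (d t)) := by
      simp [ContinuousLinearMap.neg_apply, ContinuousLinearMap.mul_apply, map_add]
      abel
    rw [heq] at h2
    exact h2
  set φ : ℝ → ℝ := fun s => δ * ‖H‖ * ‖E s‖ with hφ
  have hφcont : Continuous φ := continuous_const.mul hEcont.norm
  set B : ℝ → ℝ := fun t => ∫ s in (0 : ℝ)..t, φ s with hB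
  have hBd : ∀ t : ℝ, HasDerivAt B (φ t) t := fun t =>
    (hφcont.integral_hasStrictDerivAt 0 t).hasDerivAt
  have key : ‖g h - g 0‖ ≤ B h := by
    have := image_norm_le_of_norm_deriv_right_le_deriv_boundary
      (f := fun t => g t - g 0) (f' := fun t => E t (H (d t))) (a := 0) (b := h)
      (B := B) (B' := φ)
      (fun t _ => ((hgd t).sub_const (g 0)).continuousAt.continuousWithinAt)
      (fun t _ => ((hgd t).sub_const (g 0)).hasDerivWithinAt)
      (by simp [hB]) hBd
      (fun t _ => by
        calc ‖E t (H (d t))‖ ≤ ‖E t‖ * ‖H (d t)‖ := (E t).le_opNorm _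
          _ ≤ ‖E t‖ * (‖H‖ * ‖d t‖) :=
            mul_le_mul_of_nonneg_left (H.le_opNorm _) (norm_nonneg _)
          _ ≤ ‖E t‖ * (‖H‖ * δ) := by
            exact mul_le_mul_of_nonneg_left
              (mul_le_mul_of_nonneg_left (hd t) (norm_nonneg _)) (norm_nonneg _)
          _ = φ t := by ring)
    exact this (Set.right_mem_Icc.2 hh)
  have hBh : B h = δ * ‖H‖ * ∫ s in (0 : ℝ)..h, ‖E s‖ := by
    show (∫ s in (0 : ℝ)..h, δ * ‖H‖ * ‖E s‖) = _
    rw [intervalIntegral.integral_const_mul]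
  -- identify g h and g 0
  have hEh : E h = 1 := by
    show exp ((h - h) • A) = 1
    rw [sub_self, zero_smul ℝ A]; exact NormedSpace.exp_zero
  have hg0 : g 0 = exp (h • A) (x 0) := by
    show E 0 (x 0) - _ = _
    rw [intervalIntegral.integral_same, sub_zero, hE]
    norm_num
  have hgh : g h = x h - ∫ s in (0 : ℝ)..h, E s b := by
    show E h (x h) - _ = _
    rw [hEh, ContinuousLinearMap.one_apply]
  have hmem2 : g h - g 0 ∈ Metric.closedBall (0 : EuclideanSpace ℝ (Fin n))
      (δ * ‖H‖ * ∫ s in (0 : ℝ)..h, ‖exp ((h - s) • A)‖) := by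
    rw [Metric.mem_closedBall, dist_zero_right]
    calc ‖g h - g 0‖ ≤ B h := key
      _ = _ := hBh
  have hmem1 : exp (h • A) (x 0) + ∫ s in (0 : ℝ)..h, exp ((h - s) • A) b ∈
      (fun y => exp (h • A) y + ∫ s in (0 : ℝ)..h, exp ((h - s) • A) b) '' T :=
    Set.mem_image_of_mem _ hx0
  have hxeq : x h = (exp (h • A) (x 0) + ∫ s in (0 : ℝ)..h, exp ((h - s) • A) b)
      + (g h - g 0) := by
    rw [hgh, hg0]; abel
  rw [hxeq]
  exact Set.add_mem_add hmem1 hmem2
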